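/- Let M be a matroid of rank n on ground set V, let T ⊆ V, and let A₁, ..., Aₙ be subsets of V such that for every J ⊆ [n], either rank(⋃_{j∈J} Aⱼ) ≥ |J| or T ⊆ span(⋃_{j∈J} Aⱼ). Then there exist a subset I ⊆ [n] and pairwise distinct elements aᵢ ∈ Aᵢ for i ∈ I such that T ⊆ span({aᵢ : i ∈ I}). -/

import Mathlib

open Set Matroid

/-- The rank of a set `X` in a matroid `M`: the largest size of an independent
subset of `X`. -/
noncomputable def Matroid.setRk {α : Type*} (M : Matroid α) (X : Set α) : ℕ :=
  sSup {n : ℕ | ∃ I, M.Indep I ∧ I ⊆ X ∧ I.ncard = n}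

namespace RainbowAux

variable {α : Type*} {M : Matroid α} [M.Finite] {X Y I J : Set α} {a : α}

lemma card_le_basis (hJ : M.Indep J) (hJX : J ⊆ X) (hI : M.IsBasis I X)
    (hX : X ⊆ M.E) : J.ncard ≤ I.ncard := by
  have hIb : (M ↾ X).IsBase I := hI.restrict_isBase
  have hJi : (M ↾ X).Indep J := hJ.indep_restrict_of_subset hJX
  haveI : (M ↾ X).Finite := Matroid.restrict_finite (M.set_finite X hX)
  obtain ⟨B, hB, hJB⟩ := hJi.exists_isBase_superset
  have hBfin : B.Finite := (M ↾ X).set_finite B hB.subset_ground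
  calc J.ncard ≤ B.ncard := ncard_le_ncard hJB hBfin
    _ = I.ncard := hB.ncard_eq_ncard_of_isBase hIb

lemma setRk_eq (hI : M.IsBasis I X) (hX : X ⊆ M.E) : M.setRk X = I.ncard := by
  have hmem : I.ncard ∈ {n : ℕ | ∃ J, M.Indep J ∧ J ⊆ X ∧ J.ncard = n} :=
    ⟨I, hI.indep, hI.subset, rfl⟩
  refine IsGreatest.csSup_eq ⟨hmem, ?_⟩
  rintro m ⟨J, hJ, hJX, rfl⟩
  exact card_le_basis hJ hJX hI hX

lemma le_setRk (hJ : M.Indep J) (hJX : J ⊆ X) (hX : X ⊆ M.E) : J.ncard ≤ M.setRk X := by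
  obtain ⟨I, hI⟩ := M.exists_isBasis X hX
  rw [setRk_eq hI hX]
  exact card_le_basis hJ hJX hI hX

lemma setRk_mono (hXY : X ⊆ Y) (hY : Y ⊆ M.E) : M.setRk X ≤ M.setRk Y := by
  obtain ⟨I, hI⟩ := M.exists_isBasis X (hXY.trans hY)
  rw [setRk_eq hI (hXY.trans hY)]
  exact le_setRk hI.indep (hI.subset.trans hXY) hY

lemma setRk_closure (hX : X ⊆ M.E) : M.setRk (M.closure X) = M.setRk X := by
  obtain ⟨I, hI⟩ := M.exists_isBasis X hX
  rw [setRk_eq hI hX, setRk_eq hI.isBasis_closure_right (M.closure_subset_ground X)]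

lemma setRk_le_of_subset_closure (h : X ⊆ M.closure Y) (hY : Y ⊆ M.E) :
    M.setRk X ≤ M.setRk Y :=
  (setRk_mono h (M.closure_subset_ground Y)).trans_eq (setRk_closure hY)

lemma closure_eq_of_le (hXY : X ⊆ Y) (hY : Y ⊆ M.E) (h : M.setRk Y ≤ M.setRk X) :
    M.closure X = M.closure Y := by
  have hX : X ⊆ M.E := hXY.trans hY
  obtain ⟨I, hI⟩ := M.exists_isBasis X hX
  obtain ⟨J, hJ, hIJ⟩ := hI.indep.subset_isBasis_of_subset (hI.subset.trans hXY) hY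
  have hcard : J.ncard ≤ I.ncard := by
    rw [← setRk_eq hI hX, ← setRk_eq hJ hY]; exact h
  have hJfin : J.Finite := M.set_finite J hJ.indep.subset_ground
  have hIJ' : I = J := eq_of_subset_of_ncard_le hIJ hcard hJfin
  rw [← hI.closure_eq_closure, hIJ', hJ.closure_eq_closure]

lemma setRk_insert (haE : a ∈ M.E) (haX : a ∉ M.closure X) (hX : X ⊆ M.E) :
    M.setRk (insert a X) = M.setRk X + 1 := by
  obtain ⟨I, hI⟩ := M.exists_isBasis X hX
  have haI : a ∉ I := fun h => haX (M.subset_closure X hX (hI.subset h))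
  have hind : M.Indep (insert a I) := by
    rw [hI.indep.insert_indep_iff_of_notMem haI, hI.closure_eq_closure]
    exact ⟨haE, haX⟩
  have hbas : M.IsBasis (insert a I) (insert a X) := by
    refine hind.isBasis_of_subset_of_subset_closure (insert_subset_insert hI.subset) ?_
    refine insert_subset (M.mem_closure_of_mem (mem_insert a I)
      (insert_subset haE hI.indep.subset_ground)) ?_
    exact hI.subset_closure.trans (M.closure_subset_closure (subset_insert a I))
  rw [setRk_eq hbas (insert_subset haE hX), setRk_eq hI hX,
    ncard_insert_of_notMem haI (M.set_finite I hI.indep.subset_ground)]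

lemma setRk_empty : M.setRk ∅ = 0 := by
  have hbas : M.IsBasis ∅ ∅ :=
    M.empty_indep.isBasis_of_subset_of_subset_closure (subset_refl _) (empty_subset _)
  rw [setRk_eq hbas (empty_subset _), ncard_empty]

lemma setRk_submod (hX : X ⊆ M.E) (hY : Y ⊆ M.E) :
    M.setRk (X ∪ Y) + M.setRk (X ∩ Y) ≤ M.setRk X + M.setRk Y := by
  have hXY : X ∪ Y ⊆ M.E := union_subset hX hY
  obtain ⟨I, hI⟩ := M.exists_isBasis (X ∩ Y) (inter_subset_left.trans hX)
  obtain ⟨J, hJ, hIJ⟩ := hI.indep.subset_isBasis_of_subset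
    (hI.subset.trans (inter_subset_left.trans subset_union_left)) hXY
  have hJfin : J.Finite := M.set_finite J hJ.indep.subset_ground
  have h1 : (J ∩ X) ∪ (J ∩ Y) = J := by
    rw [← inter_union_distrib_left, inter_eq_left]; exact hJ.subset
  have h2 : (J ∩ X) ∩ (J ∩ Y) = J ∩ (X ∩ Y) := by ext x; simp; tauto
  have hcount := ncard_union_add_ncard_inter (J ∩ X) (J ∩ Y)
    (hJfin.subset inter_subset_left) (hJfin.subset inter_subset_left)
  rw [h1, h2] at hcount
  have hbX : (J ∩ X).ncard ≤ M.setRk X :=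
    le_setRk (hJ.indep.subset inter_subset_left) inter_subset_right hX
  have hbY : (J ∩ Y).ncard ≤ M.setRk Y :=
    le_setRk (hJ.indep.subset inter_subset_left) inter_subset_right hY
  have hbI : M.setRk (X ∩ Y) ≤ (J ∩ (X ∩ Y)).ncard := by
    rw [setRk_eq hI (inter_subset_left.trans hX)]
    exact ncard_le_ncard (subset_inter hIJ hI.subset) (hJfin.subset inter_subset_left)
  rw [setRk_eq hJ hXY]
  omega

end RainbowAux

namespace RainbowAux

variable {α : Type*} {ι : Type*} [DecidableEq α] [DecidableEq ι] {M : Matroid α} [M.Finite]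

lemma core [Nonempty α] (T : Set α) :
    ∀ (μ : ℕ) (C : Set α) (I₀ : Finset ι) (A : ι → Set α),
      C ⊆ M.E → (∀ i, A i ⊆ M.E) →
      2 * M.setRk ((⋃ j ∈ I₀, A j) ∪ C) + I₀.card ≤ μ + 2 * M.setRk C →
      T ⊆ M.closure ((⋃ j ∈ I₀, A j) ∪ C) →
      M.setRk ((⋃ j ∈ I₀, A j) ∪ C) ≤ I₀.card + M.setRk C →
      (∀ K ⊆ I₀, K.card + M.setRk C ≤ M.setRk ((⋃ j ∈ K, A j) ∪ C) ∨
        T ⊆ M.closure ((⋃ j ∈ K, A j) ∪ C)) →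
      ∃ (I : Finset ι) (a : ι → α), I ⊆ I₀ ∧ Set.InjOn a ↑I ∧ (∀ i ∈ I, a i ∈ A i) ∧
        T ⊆ M.closure (a '' ↑I ∪ C) := by
  intro μ
  induction μ using Nat.strong_induction_on with
  | _ μ IH =>
  intro C I₀ A hC hA hμ h1 h2 hyp
  classical
  -- basic facts about the sets A_K ∪ C
  have hAKE : ∀ K : Finset ι, (⋃ j ∈ K, A j) ∪ C ⊆ M.E := fun K =>
    union_subset (iUnion₂_subset fun j _ => hA j) hC
  have hAKmono : ∀ K L : Finset ι, K ⊆ L →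
      (⋃ j ∈ K, A j) ∪ C ⊆ (⋃ j ∈ L, A j) ∪ C := by
    intro K L hKL
    refine union_subset_union_left C (iUnion₂_subset fun j hj => ?_)
    exact subset_iUnion₂ (s := fun j (_ : j ∈ L) => A j) j (hKL hj)
  have hCsub : ∀ K : Finset ι, C ⊆ (⋃ j ∈ K, A j) ∪ C := fun _ => subset_union_right
  by_cases hcase : ∃ U, U ⊆ I₀ ∧ U ≠ I₀ ∧
      M.setRk ((⋃ j ∈ U, A j) ∪ C) ≤ U.card + M.setRk C ∧
      T ⊆ M.closure ((⋃ j ∈ U, A j) ∪ C)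
  · -- restriction case : recurse on a strictly smaller spanning index set
    obtain ⟨U, hUI, hUne, hUr, hUT⟩ := hcase
    have hUcard : U.card < I₀.card := Finset.card_lt_card (hUI.ssubset_of_ne hUne)
    have hRU : M.setRk ((⋃ j ∈ U, A j) ∪ C) ≤ M.setRk ((⋃ j ∈ I₀, A j) ∪ C) :=
      setRk_mono (hAKmono U I₀ hUI) (hAKE I₀)
    have hRC : M.setRk C ≤ M.setRk ((⋃ j ∈ U, A j) ∪ C) :=
      setRk_mono (hCsub U) (hAKE U)
    obtain ⟨I, a, hI, hinj, hmem, hcl⟩ := IH (μ - 1) (by omega) C U A hC hA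
      (by omega) hUT hUr (fun K hK => hyp K (hK.trans hUI))
    exact ⟨I, a, hI.trans hUI, hinj, hmem, hcl⟩
  push_neg at hcase
  rcases Finset.eq_empty_or_nonempty I₀ with rfl | hne
  · refine ⟨∅, fun _ => Classical.arbitrary α, Finset.Subset.refl _, by simp, by simp, ?_⟩
    simpa using h1
  -- every proper subset satisfies the rank condition
  have hproper : ∀ K, K ⊆ I₀ → K ≠ I₀ →
      K.card + M.setRk C ≤ M.setRk ((⋃ j ∈ K, A j) ∪ C) := by
    intro K hK hKne
    by_cases hTK : T ⊆ M.closure ((⋃ j ∈ K, A j) ∪ C)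
    · by_contra h
      push_neg at h
      exact hcase K hK hKne (by omega) hTK
    · exact (hyp K hK).resolve_right hTK
  have hfull : I₀.card + M.setRk C ≤ M.setRk ((⋃ j ∈ I₀, A j) ∪ C) := by
    obtain ⟨j, hj⟩ := hne
    have hKne : I₀.erase j ≠ I₀ := by
      intro h; exact (Finset.erase_eq_self.mp h) hj
    have hKp := hproper (I₀.erase j) (Finset.erase_subset j I₀) hKne
    have hcard : (I₀.erase j).card + 1 = I₀.card := Finset.card_erase_add_one hj
    by_contra h
    push_neg at h
    have hle : M.setRk ((⋃ j' ∈ I₀, A j') ∪ C) ≤ M.setRk ((⋃ j' ∈ I₀.erase j, A j') ∪ C) := by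
      omega
    have hcleq := closure_eq_of_le (hAKmono _ _ (Finset.erase_subset j I₀)) (hAKE I₀) hle
    refine hcase (I₀.erase j) (Finset.erase_subset j I₀) hKne (by
      have := setRk_mono (hAKmono _ _ (Finset.erase_subset j I₀)) (hAKE I₀)
      omega) ?_
    rw [hcleq]; exact h1
  have hall : ∀ K, K ⊆ I₀ → K.card + M.setRk C ≤ M.setRk ((⋃ j ∈ K, A j) ∪ C) := by
    intro K hK
    by_cases hKne : K = I₀
    · subst hKne; exact hfull
    · exact hproper K hK hKne
  obtain ⟨j₀, hj₀⟩ := hne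
  -- the union D of all "tight" sets avoiding j₀
  set P : Finset ι → Prop := fun K => K ⊆ I₀.erase j₀ ∧
    M.setRk ((⋃ j ∈ K, A j) ∪ C) ≤ K.card + M.setRk C with hPdef
  set D : Finset ι := ((I₀.erase j₀).powerset.filter P).sup id with hDdef
  have hPD : P D := by
    refine Finset.sup_induction ?_ ?_ ?_
    · constructor
      · exact Finset.empty_subset _
      · simp [setRk_empty]
    · rintro K1 ⟨hK1s, hK1r⟩ K2 ⟨hK2s, hK2r⟩
      have hsup : K1 ⊔ K2 = K1 ∪ K2 := rfl
      rw [hsup]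
      refine ⟨Finset.union_subset hK1s hK2s, ?_⟩
      have hU : ((⋃ j ∈ K1, A j) ∪ C) ∪ ((⋃ j ∈ K2, A j) ∪ C) =
          (⋃ j ∈ K1 ∪ K2, A j) ∪ C := by
        rw [Finset.set_biUnion_union, union_union_union_comm, union_self]
      have hIsub : (⋃ j ∈ K1 ∩ K2, A j) ∪ C ⊆
          ((⋃ j ∈ K1, A j) ∪ C) ∩ ((⋃ j ∈ K2, A j) ∪ C) := by
        refine subset_inter (hAKmono _ _ Finset.inter_subset_left)
          (hAKmono _ _ Finset.inter_subset_right)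
      have hsubmod := setRk_submod (hAKE K1) (hAKE K2)
      rw [hU] at hsubmod
      have hmono2 : M.setRk ((⋃ j ∈ K1 ∩ K2, A j) ∪ C) ≤
          M.setRk (((⋃ j ∈ K1, A j) ∪ C) ∩ ((⋃ j ∈ K2, A j) ∪ C)) :=
        setRk_mono hIsub (inter_subset_left.trans (hAKE K1))
      have hallint := hall (K1 ∩ K2)
        ((Finset.inter_subset_left).trans (hK1s.trans (Finset.erase_subset j₀ I₀)))
      have hcards := Finset.card_union_add_card_inter K1 K2
      omega
    · intro b hb
      exact (Finset.mem_filter.mp hb).2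
  have hDmax : ∀ K, P K → K ⊆ D := by
    intro K hK
    refine Finset.le_sup (f := (id : Finset ι → Finset ι)) ?_
    simp only [Finset.mem_filter, Finset.mem_powerset]
    exact ⟨hK.1, hK⟩
  have hDsub : D ⊆ I₀.erase j₀ := hPD.1
  have hDI₀ : D ⊆ I₀ := hDsub.trans (Finset.erase_subset j₀ I₀)
  have hj₀D : j₀ ∉ D := fun h => Finset.notMem_erase j₀ I₀ (hDsub h)
  have hins := hall (insert j₀ D) (Finset.insert_subset_iff.mpr ⟨hj₀, hDI₀⟩)
  rw [Finset.card_insert_of_notMem hj₀D] at hins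
  -- choose a ∈ A j₀ outside the closure of A_D ∪ C
  have ha : ∃ a ∈ A j₀, a ∉ M.closure ((⋃ j ∈ D, A j) ∪ C) := by
    by_contra h
    push_neg at h
    have hsub : (⋃ j ∈ insert j₀ D, A j) ∪ C ⊆ M.closure ((⋃ j ∈ D, A j) ∪ C) := by
      rw [Finset.set_biUnion_insert]
      refine union_subset (union_subset h ?_) ?_
      · exact (subset_union_left.trans (M.subset_closure _ (hAKE D)))
      · exact (subset_union_right.trans (M.subset_closure _ (hAKE D)))
    have hle : M.setRk ((⋃ j ∈ insert j₀ D, A j) ∪ C) ≤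
        M.setRk ((⋃ j ∈ D, A j) ∪ C) :=
      setRk_le_of_subset_closure hsub (hAKE D)
    omega
  obtain ⟨a, haA, hacl⟩ := ha
  have haE : a ∈ M.E := hA j₀ haA
  have hanotC : a ∉ M.closure C :=
    fun h => hacl (M.closure_subset_closure (hCsub D) h)
  have hC' : insert a C ⊆ M.E := insert_subset haE hC
  have hRC' : M.setRk (insert a C) = M.setRk C + 1 := setRk_insert haE hanotC hC
  -- the new family
  set A' : ι → Set α := fun i => A i \ {a} with hA'def
  have hA'E : ∀ i, A' i ⊆ M.E := fun i => (diff_subset).trans (hA i)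
  have hkey : ∀ K : Finset ι, (⋃ j ∈ K, A' j) ∪ insert a C =
      insert a ((⋃ j ∈ K, A j) ∪ C) := by
    intro K
    ext x
    simp only [hA'def, mem_union, mem_iUnion, mem_diff, mem_singleton_iff,
      mem_insert_iff, exists_prop]
    constructor
    · rintro (⟨j, hj, hxj, _⟩ | (rfl | hxC))
      · exact Or.inr (Or.inl ⟨j, hj, hxj⟩)
      · exact Or.inl rfl
      · exact Or.inr (Or.inr hxC)
    · rintro (rfl | (⟨j, hj, hxj⟩ | hxC))
      · exact Or.inr (Or.inl rfl)
      · by_cases hxa : x = a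
        · exact Or.inr (Or.inl hxa)
        · exact Or.inl ⟨j, hj, hxj, hxa⟩
      · exact Or.inr (Or.inr hxC)
  have hinsE : ∀ K : Finset ι, insert a ((⋃ j ∈ K, A j) ∪ C) ⊆ M.E := fun K =>
    insert_subset haE (hAKE K)
  -- the hypothesis for the contracted problem
  have hyp' : ∀ K ⊆ I₀.erase j₀,
      K.card + M.setRk (insert a C) ≤ M.setRk ((⋃ j ∈ K, A' j) ∪ insert a C) ∨
      T ⊆ M.closure ((⋃ j ∈ K, A' j) ∪ insert a C) := by
    intro K hK
    rw [hkey K, hRC']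
    by_cases hTK : T ⊆ M.closure ((⋃ j ∈ K, A j) ∪ C)
    · right
      exact hTK.trans (M.closure_subset_closure (subset_insert _ _))
    have hallK := hall K (hK.trans (Finset.erase_subset j₀ I₀))
    by_cases hmem : a ∈ M.closure ((⋃ j ∈ K, A j) ∪ C)
    · have hnP : ¬ P K := by
        intro hP
        exact hacl (M.closure_subset_closure (hAKmono _ _ (hDmax K hP)) hmem)
      have hgt : K.card + M.setRk C + 1 ≤ M.setRk ((⋃ j ∈ K, A j) ∪ C) := by
        by_contra h
        push_neg at h
        exact hnP ⟨hK, by omega⟩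
      left
      have := setRk_mono (subset_insert a ((⋃ j ∈ K, A j) ∪ C)) (hinsE K)
      omega
    · left
      rw [setRk_insert haE hmem (hAKE K)]
      omega
  -- remaining numeric facts
  have hcarderase : (I₀.erase j₀).card + 1 = I₀.card := Finset.card_erase_add_one hj₀
  have hcardpos : 0 < I₀.card := Finset.card_pos.mpr ⟨j₀, hj₀⟩
  have hsubI₀ : insert a ((⋃ j ∈ I₀.erase j₀, A j) ∪ C) ⊆ (⋃ j ∈ I₀, A j) ∪ C := by
    refine insert_subset ?_ (hAKmono _ _ (Finset.erase_subset j₀ I₀))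
    exact subset_union_left (mem_iUnion₂.mpr ⟨j₀, hj₀, haA⟩)
  have hR' : M.setRk (insert a ((⋃ j ∈ I₀.erase j₀, A j) ∪ C)) ≤
      M.setRk ((⋃ j ∈ I₀, A j) ∪ C) := setRk_mono hsubI₀ (hAKE I₀)
  have h1' : T ⊆ M.closure ((⋃ j ∈ I₀.erase j₀, A' j) ∪ insert a C) := by
    rcases hyp' (I₀.erase j₀) (Finset.Subset.refl _) with h | h
    · rw [hkey, hRC'] at h
      have hcleq := closure_eq_of_le hsubI₀ (hAKE I₀) (by omega)
      rw [hkey]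
      rw [hcleq]
      exact h1
    · exact h
  have h2' : M.setRk ((⋃ j ∈ I₀.erase j₀, A' j) ∪ insert a C) ≤
      (I₀.erase j₀).card + M.setRk (insert a C) := by
    rw [hkey, hRC']
    omega
  have hμ' : 2 * M.setRk ((⋃ j ∈ I₀.erase j₀, A' j) ∪ insert a C) + (I₀.erase j₀).card ≤
      (μ - 3) + 2 * M.setRk (insert a C) := by
    rw [hkey, hRC']
    omega
  obtain ⟨I, a', hI, hinj, hmem, hcl⟩ := IH (μ - 3) (by omega) (insert a C)
    (I₀.erase j₀) A' hC' hA'E hμ' h1' h2' hyp'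
  have hIne : ∀ i ∈ I, i ≠ j₀ := fun i hi => Finset.ne_of_mem_erase (hI hi)
  refine ⟨insert j₀ I, Function.update a' j₀ a, ?_, ?_, ?_, ?_⟩
  · exact Finset.insert_subset_iff.mpr ⟨hj₀, hI.trans (Finset.erase_subset j₀ I₀)⟩
  · rw [Finset.coe_insert]
    intro x hx y hy hxy
    rcases hx with rfl | hx <;> rcases hy with rfl | hy
    · rfl
    · rw [Function.update_self, Function.update_of_ne (hIne y hy)] at hxy
      exact absurd hxy.symm (hmem y hy).2
    · rw [Function.update_self, Function.update_of_ne (hIne x hx)] at hxy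
      exact absurd hxy (hmem x hx).2
    · rw [Function.update_of_ne (hIne x hx), Function.update_of_ne (hIne y hy)] at hxy
      exact hinj hx hy hxy
  · intro i hi
    rcases Finset.mem_insert.mp hi with rfl | hi
    · rw [Function.update_self]; exact haA
    · rw [Function.update_of_ne (hIne i hi)]
      exact (hmem i hi).1
  · have himg : (Function.update a' j₀ a) '' ↑(insert j₀ I) = insert a (a' '' ↑I) := by
      rw [Finset.coe_insert, Set.image_insert_eq, Function.update_self]
      congr 1
      exact Set.image_congr fun x hx => Function.update_of_ne (hIne x hx) a a'
    rw [himg, Set.insert_union, ← Set.union_insert]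
    exact hcl

end RainbowAux

open RainbowAux Set in
/-- Cooperative spanning theorem: if `M` has rank `n`, `T ⊆ V`, and sets
`A 1, …, A n` satisfy, for every `J ⊆ [n]`, either `rank(A_J) ≥ |J|` or
`T ⊆ span(A_J)`, then some rainbow set of the `A i` spans `T`. -/
theorem rainbow_spanning_cooperative {α : Type*} [DecidableEq α]
    {M : Matroid α} [M.Finite] {n : ℕ}
    (hrank : ∃ B, M.IsBase B ∧ B.ncard = n)
    (T : Set α) (hT : T ⊆ M.E)
    (A : Fin n → Set α) (hA : ∀ i, A i ⊆ M.E)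
    (hyp : ∀ J : Finset (Fin n),
      (J.card : ℕ) ≤ M.setRk (⋃ j ∈ J, A j) ∨ T ⊆ M.closure (⋃ j ∈ J, A j)) :
    ∃ (I : Finset (Fin n)) (a : Fin n → α),
      Set.InjOn a ↑I ∧ (∀ i ∈ I, a i ∈ A i) ∧
      T ⊆ M.closure (a '' ↑I) := by
  classical
  obtain ⟨B, hB, hBcard⟩ := hrank
  have hBfin : B.Finite := M.set_finite B hB.subset_ground
  rcases Nat.eq_zero_or_pos n with rfl | hpos
  · have hBe : B = ∅ := (Set.ncard_eq_zero hBfin).mp hBcard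
    refine ⟨∅, Fin.elim0, by simp, by simp, ?_⟩
    have : M.closure (Fin.elim0 '' (↑(∅ : Finset (Fin 0)) : Set (Fin 0))) = M.E := by
      rw [Finset.coe_empty, Set.image_empty, ← hBe, hB.closure_eq]
    rw [this]; exact hT
  · have hBne : B.Nonempty := by
      rw [← Set.ncard_pos hBfin, hBcard]; exact hpos
    haveI : Nonempty α := ⟨hBne.choose⟩
    have hrkE : M.setRk M.E = n := by
      rw [setRk_eq (Matroid.isBasis_ground_iff.mpr hB) (subset_refl _), hBcard]
    have hle : ∀ X, X ⊆ M.E → M.setRk X ≤ n := fun X hX =>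
      (setRk_mono hX (subset_refl _)).trans_eq hrkE
    have hAU : (⋃ j ∈ (Finset.univ : Finset (Fin n)), A j) ⊆ M.E :=
      iUnion₂_subset fun j _ => hA j
    have h1 : T ⊆ M.closure (⋃ j ∈ (Finset.univ : Finset (Fin n)), A j) := by
      rcases hyp Finset.univ with h | h
      · rw [Finset.card_univ, Fintype.card_fin] at h
        have hEq := closure_eq_of_le hAU (subset_refl M.E)
          (by rw [hrkE]; exact le_trans h (le_refl _))
        rw [hEq, M.closure_ground]; exact hT
      · exact h
    have hre : M.setRk (∅ : Set α) = 0 := setRk_empty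
    obtain ⟨I, a, hIsub, hinj, hmem, hcl⟩ := core (M := M) T
      (2 * M.setRk ((⋃ j ∈ (Finset.univ : Finset (Fin n)), A j) ∪ ∅) + Finset.univ.card)
      ∅ Finset.univ A (empty_subset _) hA (by omega)
      (by simpa using h1)
      (by
        rw [union_empty, hre, Finset.card_univ, Fintype.card_fin]
        simpa using hle _ hAU)
      (by
        intro K _
        rw [union_empty, hre]
        simpa using hyp K)
    exact ⟨I, a, hinj, hmem, by simpa using hcl⟩
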